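/- Let X be a random vector in R^d with density f, and let g be another density with g(X) > 0 a.s. Suppose P(g(X) <= t) <= μ t^γ for all t > 0, for constants μ > 0 and γ in (0,1]. Then for sufficiently small t > 0: if γ < 1, then E[(1/g(X)) 1{g(X) > t}] <= (μ/(1-γ)) t^{γ-1}; and if γ = 1, then E[(1/g(X)) 1{g(X) > t}] <= μ (1 + ln(1/(μ t))). -/

import Mathlib

open MeasureTheory Real

set_option maxHeartbeats 1000000 in
theorem tail_density_ratio_bound
    {Ω : Type*} [MeasurableSpace Ω] (μ : Measure Ω) [IsProbabilityMeasure μ]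
    {d : ℕ} (X : Ω → EuclideanSpace ℝ (Fin d)) (hX : Measurable X)
    (g : EuclideanSpace ℝ (Fin d) → ℝ) (hg : Measurable g)
    (μc γ : ℝ) (hμc : 0 < μc) (hγ0 : 0 < γ) (hγ1 : γ ≤ 1)
    (hgpos : ∀ᵐ ω ∂μ, 0 < g (X ω))
    (htail : ∀ t : ℝ, 0 < t → (μ {ω | g (X ω) ≤ t}).toReal ≤ μc * t ^ γ) :
    ∃ t₀ > 0, ∀ t : ℝ, 0 < t → t < t₀ →
      (γ < 1 →
        ∫ ω in {ω | t < g (X ω)}, (g (X ω))⁻¹ ∂μ ≤ μc / (1 - γ) * t ^ (γ - 1)) ∧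
      (γ = 1 →
        ∫ ω in {ω | t < g (X ω)}, (g (X ω))⁻¹ ∂μ ≤ μc * (1 + Real.log (1 / (μc * t)))) := by
  refine ⟨μc⁻¹, by positivity, fun t ht htlt => ?_⟩
  have htinv : μc < t⁻¹ := by
    rw [← inv_inv μc]; exact (inv_lt_inv₀ (by positivity) ht).mpr htlt
  set S : Set Ω := {ω | t < g (X ω)} with hS
  have hSmeas : MeasurableSet S := measurableSet_lt measurable_const (hg.comp hX)
  set F : Ω → ℝ := S.indicator (fun ω => (g (X ω))⁻¹) with hF
  have hFmeas : Measurable F := ((hg.comp hX).inv).indicator hSmeas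
  have hFnn : ∀ ω, 0 ≤ F ω := by
    intro ω
    by_cases h : ω ∈ S
    · have : (0:ℝ) < g (X ω) := lt_trans ht h
      simp [hF, h, le_of_lt (inv_pos.mpr this)]
    · simp [hF, h]
  have hFle : ∀ ω, F ω ≤ t⁻¹ := by
    intro ω
    by_cases h : ω ∈ S
    · simp only [hF, Set.indicator_of_mem h]
      exact (inv_le_inv₀ (lt_trans ht h) ht).mpr (le_of_lt h)
    · simp [hF, h, le_of_lt (inv_pos.mpr ht)]
  have hFint : Integrable F μ := by
    refine (integrable_const t⁻¹).mono' hFmeas.aestronglyMeasurable ?_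
    exact Filter.Eventually.of_forall fun ω => by
      rw [Real.norm_eq_abs, abs_of_nonneg (hFnn ω)]; exact hFle ω
  have hint_eq : ∫ ω in S, (g (X ω))⁻¹ ∂μ = ∫ ω, F ω ∂μ :=
    (integral_indicator hSmeas).symm
  set φ : ℝ → ℝ := fun s => (μ {a | s < F a}).toReal with hφ
  have layer : ∫ ω, F ω ∂μ = ∫ s in Set.Ioi (0:ℝ), φ s :=
    hFint.integral_eq_integral_meas_lt (Filter.Eventually.of_forall hFnn)
  have hφanti : Antitone φ := fun s s' h =>
    ENNReal.toReal_mono (measure_ne_top _ _)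
      (measure_mono fun a ha => lt_of_le_of_lt h ha)
  have hφmeas : Measurable φ := hφanti.measurable
  have hφnn : ∀ s, 0 ≤ φ s := fun s => ENNReal.toReal_nonneg
  have hφ1 : ∀ s, φ s ≤ 1 := by
    intro s
    have := ENNReal.toReal_mono (measure_ne_top μ Set.univ)
      (measure_mono (Set.subset_univ {a | s < F a}))
    simpa using this
  have hφbound : ∀ s : ℝ, 0 < s → φ s ≤ μc * s ^ (-γ) := by
    intro s hs
    have hsub : {a | s < F a} ⊆ {ω | g (X ω) ≤ s⁻¹} := by
      intro a ha
      have hmem : a ∈ S := by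
        by_contra hc
        have : F a = 0 := by simp [hF, hc]
        exact absurd (this ▸ ha) (not_lt.mpr hs.le)
      have hFa : F a = (g (X a))⁻¹ := by simp [hF, hmem]
      have hga : (0:ℝ) < g (X a) := lt_trans ht hmem
      have hlt : s < (g (X a))⁻¹ := hFa ▸ ha
      have : g (X a) < s⁻¹ := by
        rw [← inv_inv (g (X a))]
        exact (inv_lt_inv₀ (inv_pos.mpr hga) hs).mpr hlt
      exact le_of_lt this
    have h1 : φ s ≤ (μ {ω | g (X ω) ≤ s⁻¹}).toReal :=
      ENNReal.toReal_mono (measure_ne_top _ _) (measure_mono hsub)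
    have h2 := htail s⁻¹ (inv_pos.mpr hs)
    have h3 : (s⁻¹) ^ γ = s ^ (-γ) := by
      rw [Real.inv_rpow hs.le, ← Real.rpow_neg hs.le]
    calc φ s ≤ μc * (s⁻¹) ^ γ := le_trans h1 h2
      _ = μc * s ^ (-γ) := by rw [h3]
  have hφ0 : ∀ s : ℝ, t⁻¹ < s → φ s = 0 := by
    intro s hs
    have : {a | s < F a} = ∅ := by
      ext a
      simp only [Set.mem_setOf_eq, Set.mem_empty_iff_false, iff_false, not_lt]
      exact le_trans (hFle a) hs.le
    simp [hφ, this]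
  rcases lt_or_eq_of_le hγ1 with hlt1 | heq1
  · -- case γ < 1
    refine ⟨fun _ => ?_, fun h => absurd h (ne_of_lt hlt1)⟩
    set h₁ : ℝ → ℝ := (Set.Ioc (0:ℝ) t⁻¹).indicator (fun s => μc * s ^ (-γ)) with hh₁
    have hIntOn : IntegrableOn (fun s => μc * s ^ (-γ)) (Set.Ioc (0:ℝ) t⁻¹) :=
      ((intervalIntegrable_iff_integrableOn_Ioc_of_le (le_of_lt (inv_pos.mpr ht))).mp
        ((intervalIntegral.intervalIntegrable_rpow' (by linarith) (a := 0) (b := t⁻¹)).const_mul μc))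
    have hh₁int : Integrable h₁ := hIntOn.integrable_indicator measurableSet_Ioc
    have hmono : ∀ s ∈ Set.Ioi (0:ℝ), φ s ≤ h₁ s := by
      intro s hs
      by_cases hmem : s ∈ Set.Ioc (0:ℝ) t⁻¹
      · simp only [hh₁, Set.indicator_of_mem hmem]
        exact hφbound s hmem.1
      · have hsbig : t⁻¹ < s := by
          rcases not_and_or.mp hmem with h | h
          · exact absurd hs h
          · exact lt_of_not_ge h
        simp [hh₁, hmem, hφ0 s hsbig]
    have hφint : IntegrableOn φ (Set.Ioi (0:ℝ)) := by
      refine (hh₁int.integrableOn).mono' hφmeas.aestronglyMeasurable ?_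
      filter_upwards [self_mem_ae_restrict measurableSet_Ioi] with s hs
      rw [Real.norm_eq_abs, abs_of_nonneg (hφnn s)]
      exact hmono s hs
    have step : ∫ s in Set.Ioi (0:ℝ), φ s ≤ ∫ s in Set.Ioi (0:ℝ), h₁ s :=
      setIntegral_mono_on hφint hh₁int.integrableOn measurableSet_Ioi hmono
    have hcomp : ∫ s in Set.Ioi (0:ℝ), h₁ s = μc / (1 - γ) * t ^ (γ - 1) := by
      rw [hh₁, setIntegral_indicator measurableSet_Ioc,
        Set.inter_eq_self_of_subset_right Set.Ioc_subset_Ioi_self,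
        ← intervalIntegral.integral_of_le (le_of_lt (inv_pos.mpr ht))]
      rw [intervalIntegral.integral_const_mul, integral_rpow (Or.inl (by linarith))]
      have h0 : (0:ℝ) ^ (-γ + 1) = 0 := Real.zero_rpow (by linarith)
      have h1 : (t⁻¹) ^ (-γ + 1) = t ^ (γ - 1) := by
        rw [← Real.rpow_neg_one t, ← Real.rpow_mul ht.le]
        ring_nf
      rw [h0, h1]
      have hne : (1:ℝ) - γ ≠ 0 := (sub_pos.mpr hlt1).ne'
      have hne' : -γ + 1 ≠ 0 := by rw [neg_add_eq_sub]; exact hne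
      field_simp
      ring
    rw [hint_eq, layer]
    rw [← hcomp]
    exact step
  · -- case γ = 1
    refine ⟨fun h => absurd heq1 (ne_of_lt h), fun _ => ?_⟩
    subst heq1
    set h₂ : ℝ → ℝ := (Set.Ioc (0:ℝ) μc).indicator (fun _ => 1)
      + (Set.Ioc μc t⁻¹).indicator (fun s => μc * s⁻¹) with hh₂
    have hIntOn2 : IntegrableOn (fun s : ℝ => μc * s⁻¹) (Set.Ioc μc t⁻¹) := by
      refine (intervalIntegrable_iff_integrableOn_Ioc_of_le htinv.le).mp ?_
      refine IntervalIntegrable.const_mul ?_ μc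
      refine intervalIntegral.intervalIntegrable_inv (fun x hx => ?_) continuousOn_id
      have : (0:ℝ) < x := lt_of_lt_of_le hμc ((le_min le_rfl htinv.le).trans hx.1)
      exact ne_of_gt this
    have hi1 : Integrable ((Set.Ioc (0:ℝ) μc).indicator (fun _ => (1:ℝ))) :=
      (integrableOn_const measure_Ioc_lt_top.ne).integrable_indicator
        measurableSet_Ioc
    have hi2 : Integrable ((Set.Ioc μc t⁻¹).indicator (fun s => μc * s⁻¹)) :=
      hIntOn2.integrable_indicator measurableSet_Ioc
    have hh₂int : Integrable h₂ := hi1.add hi2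
    have hmono : ∀ s ∈ Set.Ioi (0:ℝ), φ s ≤ h₂ s := by
      intro s hs
      simp only [hh₂, Pi.add_apply]
      rcases le_or_gt s μc with hsle | hsgt
      · have hm1 : s ∈ Set.Ioc (0:ℝ) μc := ⟨hs, hsle⟩
        have hm2 : s ∉ Set.Ioc μc t⁻¹ := fun hc => absurd hc.1 (not_lt.mpr hsle)
        rw [Set.indicator_of_mem hm1, Set.indicator_of_notMem hm2]
        simpa using hφ1 s
      · have hm1 : s ∉ Set.Ioc (0:ℝ) μc := fun hc => absurd hsgt (not_lt.mpr hc.2)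
        rw [Set.indicator_of_notMem hm1, zero_add]
        rcases le_or_gt s t⁻¹ with hsle2 | hsgt2
        · have hm : s ∈ Set.Ioc μc t⁻¹ := ⟨hsgt, hsle2⟩
          rw [Set.indicator_of_mem hm]
          have := hφbound s hs
          rwa [Real.rpow_neg_one] at this
        · rw [Set.indicator_of_notMem (fun hc => absurd hsgt2 (not_lt.mpr hc.2))]
          rw [hφ0 s hsgt2]
    have hφint : IntegrableOn φ (Set.Ioi (0:ℝ)) := by
      refine (hh₂int.integrableOn).mono' hφmeas.aestronglyMeasurable ?_
      filter_upwards [self_mem_ae_restrict measurableSet_Ioi] with s hs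
      rw [Real.norm_eq_abs, abs_of_nonneg (hφnn s)]
      exact hmono s hs
    have step : ∫ s in Set.Ioi (0:ℝ), φ s ≤ ∫ s in Set.Ioi (0:ℝ), h₂ s :=
      setIntegral_mono_on hφint hh₂int.integrableOn measurableSet_Ioi hmono
    have hcomp : ∫ s in Set.Ioi (0:ℝ), h₂ s = μc * (1 + Real.log (1 / (μc * t))) := by
      simp only [hh₂, Pi.add_apply]
      rw [integral_add (hi1.integrableOn) (hi2.integrableOn)]
      rw [setIntegral_indicator measurableSet_Ioc, setIntegral_indicator measurableSet_Ioc]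
      rw [Set.inter_eq_self_of_subset_right Set.Ioc_subset_Ioi_self,
        Set.inter_eq_self_of_subset_right
          (Set.Ioc_subset_Ioi_self.trans (Set.Ioi_subset_Ioi hμc.le))]
      rw [← intervalIntegral.integral_of_le htinv.le,
        intervalIntegral.integral_const_mul, integral_inv (by
          intro hc
          rcases hc with ⟨h1, _⟩
          simp only [min_le_iff] at h1
          rcases h1 with h | h
          · exact absurd h (not_le.mpr hμc)
          · exact absurd h (not_le.mpr (inv_pos.mpr ht)))]
      rw [setIntegral_const]
      simp only [Real.volume_Ioc, smul_eq_mul, mul_one, tsub_zero]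
      rw [Real.volume_real_Ioc_of_le hμc.le, sub_zero]
      have : t⁻¹ / μc = 1 / (μc * t) := by field_simp
      rw [this]
      ring
    rw [hint_eq, layer, ← hcomp]
    exact step
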